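/- Let w_1, …, w_N : ℝ^n → ℝ^n be a hyperbolic IFS on (ℝ^n, d) with contraction factors λ_1, …, λ_N ∈ [0, 1), λ_max = max_i λ_i, and attractor A_∞, and let w̃_1, …, w̃_N be the δ-roundoffs of the w_i. Let A ⊂ D^n(δ) be a nonempty set such that w̃_i(A) ⊂ A for every i, and such that every point x̃ ∈ A is recurrent in the sense that there exist k ≥ 1 and indices i_1, …, i_k ∈ {1, …, N} with w̃_{i_k} ∘ ⋯ ∘ w̃_{i_1}(x̃) = x̃. Then the Hausdorff distance between A and A_∞ satisfies h(A, A_∞) ≤ θ(1 − λ_max)^{−1}. -/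

import Mathlib

open Set

noncomputable section

/-- The δ-discretization of ℝⁿ: the set of centers of the cubes of the δ-grid. -/
def Dgrid (n : ℕ) (δ : ℝ) : Set (Fin n → ℝ) :=
  {x | ∃ m : Fin n → ℤ, x = fun j => δ * (m j : ℝ)}

/-- The δ-roundoff of a point `x ∈ ℝⁿ`. -/
def roundPt (n : ℕ) (δ : ℝ) (x : Fin n → ℝ) : Fin n → ℝ :=
  fun j => δ * (⌊x j / δ + 1 / 2⌋ : ℤ)

/-- The δ-roundoff of a mapping `w : ℝⁿ → ℝⁿ`. -/
def roundMap (n : ℕ) (δ : ℝ) (w : (Fin n → ℝ) → (Fin n → ℝ)) :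
    (Fin n → ℝ) → (Fin n → ℝ) :=
  fun x => roundPt n δ (w x)

/-- The diameter of a δ-cube with respect to the norm `nrm`; `θ` is half this value. -/
def cubeDiam (n : ℕ) (δ : ℝ) (nrm : (Fin n → ℝ) → ℝ) : ℝ :=
  sSup {r | ∃ x y : Fin n → ℝ,
    (∀ j, -(δ / 2) ≤ x j ∧ x j < δ / 2) ∧
    (∀ j, -(δ / 2) ≤ y j ∧ y j < δ / 2) ∧ r = nrm (x - y)}

section auxlems

variable {n : ℕ} {nrm : (Fin n → ℝ) → ℝ}

lemma nrm_zero' (hnrm_eq : ∀ x : Fin n → ℝ, nrm x = 0 ↔ x = 0) : nrm 0 = 0 :=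
  (hnrm_eq 0).mpr rfl

lemma nrm_neg' (hnrm_smul : ∀ (a : ℝ) (x : Fin n → ℝ), nrm (a • x) = |a| * nrm x)
    (x : Fin n → ℝ) : nrm (-x) = nrm x := by
  have := hnrm_smul (-1) x
  simpa using this

lemma nrm_nonneg' (hnrm_eq : ∀ x : Fin n → ℝ, nrm x = 0 ↔ x = 0)
    (hnrm_smul : ∀ (a : ℝ) (x : Fin n → ℝ), nrm (a • x) = |a| * nrm x)
    (hnrm_add : ∀ x y : Fin n → ℝ, nrm (x + y) ≤ nrm x + nrm y)
    (x : Fin n → ℝ) : 0 ≤ nrm x := by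
  have h := hnrm_add x (-x)
  rw [add_neg_cancel, nrm_zero' hnrm_eq, nrm_neg' hnrm_smul] at h
  linarith

lemma nrm_sum_le' (hnrm_eq : ∀ x : Fin n → ℝ, nrm x = 0 ↔ x = 0)
    (hnrm_add : ∀ x y : Fin n → ℝ, nrm (x + y) ≤ nrm x + nrm y)
    {ι : Type*} [DecidableEq ι] (s : Finset ι) (f : ι → (Fin n → ℝ)) :
    nrm (∑ j ∈ s, f j) ≤ ∑ j ∈ s, nrm (f j) := by
  induction s using Finset.induction with
  | empty => simp [nrm_zero' hnrm_eq]
  | insert _ _ hx ih =>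
    rw [Finset.sum_insert hx, Finset.sum_insert hx]
    exact le_trans (hnrm_add _ _) (by linarith)

/-- comparison with the sup norm -/
lemma nrm_le_C_mul' (hnrm_eq : ∀ x : Fin n → ℝ, nrm x = 0 ↔ x = 0)
    (hnrm_smul : ∀ (a : ℝ) (x : Fin n → ℝ), nrm (a • x) = |a| * nrm x)
    (hnrm_add : ∀ x y : Fin n → ℝ, nrm (x + y) ≤ nrm x + nrm y)
    (x : Fin n → ℝ) :
    nrm x ≤ (∑ j : Fin n, nrm (fun k => if j = k then 1 else 0)) * ‖x‖ := by
  have hx := pi_eq_sum_univ x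
  calc nrm x = nrm (∑ j : Fin n, x j • fun k => if j = k then (1:ℝ) else 0) := by rw [← hx]
    _ ≤ ∑ j : Fin n, nrm (x j • fun k => if j = k then (1:ℝ) else 0) :=
        nrm_sum_le' hnrm_eq hnrm_add _ _
    _ = ∑ j : Fin n, |x j| * nrm (fun k => if j = k then (1:ℝ) else 0) := by
        simp [hnrm_smul]
    _ ≤ ∑ j : Fin n, ‖x‖ * nrm (fun k => if j = k then (1:ℝ) else 0) := by
        apply Finset.sum_le_sum
        intro j _
        have h1 : |x j| ≤ ‖x‖ := by
          have := norm_le_pi_norm x j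
          simpa [Real.norm_eq_abs] using this
        have h2 : 0 ≤ nrm (fun k => if j = k then (1:ℝ) else 0) :=
          nrm_nonneg' hnrm_eq hnrm_smul hnrm_add _
        exact mul_le_mul_of_nonneg_right h1 h2
    _ = (∑ j : Fin n, nrm (fun k => if j = k then 1 else 0)) * ‖x‖ := by
        rw [Finset.sum_mul]
        exact Finset.sum_congr rfl (fun j _ => mul_comm _ _)

end auxlems

section cube

variable {n : ℕ} {δ : ℝ} {nrm : (Fin n → ℝ) → ℝ}
variable (hnrm_eq : ∀ x : Fin n → ℝ, nrm x = 0 ↔ x = 0)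
variable (hnrm_smul : ∀ (a : ℝ) (x : Fin n → ℝ), nrm (a • x) = |a| * nrm x)
variable (hnrm_add : ∀ x y : Fin n → ℝ, nrm (x + y) ≤ nrm x + nrm y)
variable (hδ : 0 < δ)

include hnrm_eq hnrm_smul hnrm_add hδ

lemma cube_bddAbove : BddAbove {r | ∃ x y : Fin n → ℝ,
    (∀ j, -(δ / 2) ≤ x j ∧ x j < δ / 2) ∧
    (∀ j, -(δ / 2) ≤ y j ∧ y j < δ / 2) ∧ r = nrm (x - y)} := by
  set C := ∑ j : Fin n, nrm (fun k => if j = k then 1 else 0) with hC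
  have hC0 : 0 ≤ C := Finset.sum_nonneg fun j _ =>
    nrm_nonneg' hnrm_eq hnrm_smul hnrm_add _
  refine ⟨C * δ, ?_⟩
  rintro r ⟨x, y, hx, hy, rfl⟩
  have hxy : ‖x - y‖ ≤ δ := by
    apply pi_norm_le_iff_of_nonneg hδ.le |>.mpr
    intro j
    have h1 := hx j; have h2 := hy j
    rw [Real.norm_eq_abs]
    have : (x - y) j = x j - y j := rfl
    rw [this, abs_le]
    constructor <;> linarith
  calc nrm (x - y) ≤ C * ‖x - y‖ := nrm_le_C_mul' hnrm_eq hnrm_smul hnrm_add _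
    _ ≤ C * δ := mul_le_mul_of_nonneg_left hxy hC0

lemma cubeDiam_nonneg : 0 ≤ cubeDiam n δ nrm := by
  apply le_csSup (cube_bddAbove hnrm_eq hnrm_smul hnrm_add hδ)
  exact ⟨0, 0, fun j => ⟨by simp; linarith, by simp; linarith⟩,
    fun j => ⟨by simp; linarith, by simp; linarith⟩, by simp [nrm_zero' hnrm_eq]⟩

lemma nrm_cube_le (u : Fin n → ℝ) (hu : ∀ j, -(δ / 2) ≤ u j ∧ u j < δ / 2) :
    nrm u ≤ cubeDiam n δ nrm / 2 := by
  have hd0 : 0 ≤ cubeDiam n δ nrm := cubeDiam_nonneg hnrm_eq hnrm_smul hnrm_add hδ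
  rcases le_or_gt (nrm u) 0 with h | h
  · linarith
  · by_contra hcon
    push_neg at hcon
    have h1 : cubeDiam n δ nrm / (2 * nrm u) < 1 := by
      rw [div_lt_one (by positivity)]; linarith
    obtain ⟨t, ht1, ht2⟩ := exists_between h1
    have ht0 : 0 < t := lt_of_le_of_lt (by positivity) ht1
    have habs : ∀ j, |u j| ≤ δ / 2 := by
      intro j; have := hu j; rw [abs_le]; constructor <;> linarith
    have hmem : (2 * t) * nrm u ∈ {r | ∃ x y : Fin n → ℝ,
        (∀ j, -(δ / 2) ≤ x j ∧ x j < δ / 2) ∧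
        (∀ j, -(δ / 2) ≤ y j ∧ y j < δ / 2) ∧ r = nrm (x - y)} := by
      refine ⟨t • u, -(t • u), ?_, ?_, ?_⟩
      · intro j
        have : |t * u j| < δ / 2 := by
          rw [abs_mul, abs_of_pos ht0]
          calc t * |u j| ≤ t * (δ / 2) := by
                exact mul_le_mul_of_nonneg_left (habs j) ht0.le
            _ < δ / 2 := by nlinarith
        have := abs_lt.mp this
        constructor
        · exact le_of_lt (by simpa [Pi.smul_apply, smul_eq_mul] using this.1)
        · simpa [Pi.smul_apply, smul_eq_mul] using this.2
      · intro j
        have : |t * u j| < δ / 2 := by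
          rw [abs_mul, abs_of_pos ht0]
          calc t * |u j| ≤ t * (δ / 2) := by
                exact mul_le_mul_of_nonneg_left (habs j) ht0.le
            _ < δ / 2 := by nlinarith
        have h2 := abs_lt.mp this
        constructor
        · have : (-(t • u)) j = -(t * u j) := rfl
          rw [this]; linarith [h2.2]
        · have : (-(t • u)) j = -(t * u j) := rfl
          rw [this]; linarith [h2.1]
      · have : t • u - -(t • u) = (2 * t) • u := by
          ext j; simp [Pi.smul_apply, smul_eq_mul]; ring
        rw [this, hnrm_smul, abs_of_pos (by positivity)]
    have hle : 2 * t * nrm u ≤ cubeDiam n δ nrm :=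
      le_csSup (cube_bddAbove hnrm_eq hnrm_smul hnrm_add hδ) hmem
    have hgt : cubeDiam n δ nrm < 2 * t * nrm u := by
      have := (div_lt_iff₀ (by positivity : (0:ℝ) < 2 * nrm u)).mp ht1
      linarith [this]
    linarith

omit hnrm_eq hnrm_smul hnrm_add in
lemma roundPt_err (x : Fin n → ℝ) :
    ∀ j, -(δ / 2) ≤ x j - roundPt n δ x j ∧ x j - roundPt n δ x j < δ / 2 := by
  intro j
  set m : ℤ := ⌊x j / δ + 1 / 2⌋ with hm
  have h1 : (m : ℝ) ≤ x j / δ + 1 / 2 := Int.floor_le _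
  have h2 : x j / δ + 1 / 2 < m + 1 := Int.lt_floor_add_one _
  have hx1 : δ * ((m : ℝ) - 1 / 2) ≤ x j := by
    have := mul_le_mul_of_nonneg_left (by linarith : (m:ℝ) - 1/2 ≤ x j / δ) hδ.le
    rwa [mul_div_cancel₀ _ hδ.ne'] at this
  have hx2 : x j < δ * ((m : ℝ) + 1 / 2) := by
    have := mul_lt_mul_of_pos_left (by linarith : x j / δ < (m:ℝ) + 1/2) hδ
    rwa [mul_div_cancel₀ _ hδ.ne'] at this
  have hr : roundPt n δ x j = δ * (m : ℝ) := rfl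
  rw [hr]
  constructor <;> nlinarith

lemma nrm_roundPt_le (x : Fin n → ℝ) :
    nrm (x - roundPt n δ x) ≤ cubeDiam n δ nrm / 2 := by
  apply nrm_cube_le hnrm_eq hnrm_smul hnrm_add hδ
  intro j
  exact roundPt_err hδ x j

end cube
/-- let `w₁, …, w_N` be a hyperbolic IFS with attractor `A_∞` (the
unique nonempty compact set with `A_∞ = ⋃ᵢ wᵢ(A_∞)`), and let `A ⊆ D^n(δ)` be a
nonempty set closed under the δ-roundoffs `w̃ᵢ` all of whose points are recurrent
(each is a fixed point of some nonempty composition of the maps `w̃ᵢ`).  Then the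
Hausdorff distance satisfies `h(A, A_∞) ≤ θ(1-λ_max)⁻¹`, expressed as: for every
`ε > 0`, `A_∞` lies in the `(θ(1-λ_max)⁻¹ + ε)`-neighbourhood of `A` and `A` lies
in the `(θ(1-λ_max)⁻¹ + ε)`-neighbourhood of `A_∞` for the metric `d(x,y) = nrm (x-y)`. -/
theorem stmt_18 (n : ℕ) (hn : 1 ≤ n) (δ : ℝ) (hδ : 0 < δ)
    (nrm : (Fin n → ℝ) → ℝ)
    (hnrm_eq : ∀ x, nrm x = 0 ↔ x = 0)
    (hnrm_smul : ∀ (a : ℝ) (x : Fin n → ℝ), nrm (a • x) = |a| * nrm x)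
    (hnrm_add : ∀ x y : Fin n → ℝ, nrm (x + y) ≤ nrm x + nrm y)
    (N : ℕ) (hN : 0 < N)
    (w : Fin N → (Fin n → ℝ) → (Fin n → ℝ))
    (lam : Fin N → ℝ) (hlam : ∀ i, lam i ∈ Set.Ico (0 : ℝ) 1)
    (hcontr : ∀ i, ∀ x y : Fin n → ℝ, nrm (w i x - w i y) ≤ lam i * nrm (x - y))
    (lmax : ℝ) (hlmax_ub : ∀ i, lam i ≤ lmax) (hlmax_mem : ∃ i, lam i = lmax)
    (θ : ℝ) (hθ : θ = cubeDiam n δ nrm / 2)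
    (Ainf : Set (Fin n → ℝ)) (hAinf_ne : Ainf.Nonempty)
    (hAinf_cpt : IsCompact Ainf) (hAinf_inv : Ainf = ⋃ i, w i '' Ainf)
    (A : Set (Fin n → ℝ)) (hA : A ⊆ Dgrid n δ) (hAne : A.Nonempty)
    (hAw : ∀ i, ∀ x ∈ A, roundMap n δ (w i) x ∈ A)
    (hrec : ∀ x ∈ A, ∃ L : List (Fin N), L ≠ [] ∧
      L.foldl (fun p i => roundMap n δ (w i) p) x = x) :
    ∀ ε > 0,
      (∀ a ∈ Ainf, ∃ x ∈ A, nrm (a - x) < θ * (1 - lmax)⁻¹ + ε) ∧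
      (∀ x ∈ A, ∃ a ∈ Ainf, nrm (x - a) < θ * (1 - lmax)⁻¹ + ε) := by
  obtain ⟨i0, hi0⟩ := hlmax_mem
  have hl0 : 0 ≤ lmax := hi0 ▸ (hlam i0).1
  have hl1 : lmax < 1 := hi0 ▸ (hlam i0).2
  have hq0 : 0 < 1 - lmax := by linarith
  have hnn : ∀ x, 0 ≤ nrm x := nrm_nonneg' hnrm_eq hnrm_smul hnrm_add
  have hθ0 : 0 ≤ θ := by
    rw [hθ]
    have := cubeDiam_nonneg hnrm_eq hnrm_smul hnrm_add hδ
    linarith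
  have herr : ∀ z, nrm (z - roundPt n δ z) ≤ θ := by
    intro z; rw [hθ]; exact nrm_roundPt_le hnrm_eq hnrm_smul hnrm_add hδ z
  have herr' : ∀ z, nrm (roundPt n δ z - z) ≤ θ := by
    intro z
    have h : roundPt n δ z - z = -(z - roundPt n δ z) := by abel
    rw [h, nrm_neg' hnrm_smul]; exact herr z
  have htri : ∀ x y z : Fin n → ℝ, nrm (x - z) ≤ nrm (x - y) + nrm (y - z) := by
    intro x y z
    have h : x - z = (x - y) + (y - z) := by abel
    rw [h]; exact hnrm_add _ _
  have hcon' : ∀ i, ∀ x y : Fin n → ℝ, nrm (w i x - w i y) ≤ lmax * nrm (x - y) :=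
    fun i x y => (hcontr i x y).trans (mul_le_mul_of_nonneg_right (hlmax_ub i) (hnn _))
  have hwmem : ∀ i, ∀ a ∈ Ainf, w i a ∈ Ainf := by
    intro i a ha
    rw [hAinf_inv]
    exact mem_iUnion.mpr ⟨i, mem_image_of_mem _ ha⟩
  -- distance to the attractor
  set S : (Fin n → ℝ) → Set ℝ := fun y => (fun a => nrm (y - a)) '' Ainf with hSdef
  have hSne : ∀ y, (S y).Nonempty := fun y => hAinf_ne.image _
  have hSbd : ∀ y, BddBelow (S y) := fun y => ⟨0, by rintro r ⟨a, _, rfl⟩; exact hnn _⟩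
  set dA : (Fin n → ℝ) → ℝ := fun y => sInf (S y) with hdAdef
  have hdA_le : ∀ y, ∀ a ∈ Ainf, dA y ≤ nrm (y - a) :=
    fun y a ha => csInf_le (hSbd y) ⟨a, ha, rfl⟩
  have hdA_ex : ∀ y, ∀ ε > (0:ℝ), ∃ a ∈ Ainf, nrm (y - a) < dA y + ε := by
    intro y ε hε
    obtain ⟨r, ⟨a, ha, rfl⟩, hr⟩ :=
      exists_lt_of_csInf_lt (hSne y) (lt_add_of_pos_right (dA y) hε)
    exact ⟨a, ha, hr⟩
  -- one discrete step
  have hstep : ∀ (i : Fin N) (y : Fin n → ℝ),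
      dA (roundMap n δ (w i) y) ≤ θ + lmax * dA y := by
    intro i y
    apply le_of_forall_pos_le_add
    intro ε hε
    obtain ⟨a, ha, hay⟩ := hdA_ex y (ε / (lmax + 1)) (by positivity)
    have h1 : dA (roundMap n δ (w i) y) ≤ nrm (roundMap n δ (w i) y - w i a) :=
      hdA_le _ (w i a) (hwmem i a ha)
    have h2 : nrm (roundMap n δ (w i) y - w i a)
        ≤ nrm (roundMap n δ (w i) y - w i y) + nrm (w i y - w i a) := htri _ _ _
    have h3 : nrm (roundMap n δ (w i) y - w i y) ≤ θ := herr' (w i y)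
    have h4 := hcon' i y a
    have h5 : lmax * nrm (y - a) ≤ lmax * (dA y + ε / (lmax + 1)) :=
      mul_le_mul_of_nonneg_left hay.le hl0
    have h6 : lmax * (ε / (lmax + 1)) ≤ ε := by
      have hε' : 0 ≤ ε / (lmax + 1) := by positivity
      have : lmax * (ε / (lmax + 1)) ≤ (lmax + 1) * (ε / (lmax + 1)) := by nlinarith
      rwa [mul_div_cancel₀ _ (by linarith : lmax + 1 ≠ 0)] at this
    nlinarith [h1, h2, h3, h4, h5, h6]
  -- orbit estimate
  have horbit : ∀ L : List (Fin N), ∀ y,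
      dA (L.foldl (fun p i => roundMap n δ (w i) p) y)
      ≤ θ * (∑ j ∈ Finset.range L.length, lmax ^ j) + lmax ^ L.length * dA y := by
    intro L
    induction L with
    | nil => intro y; simp
    | cons i L ih =>
      intro y
      have h1 := ih (roundMap n δ (w i) y)
      have h2 := hstep i y
      have h3 : lmax ^ L.length * dA (roundMap n δ (w i) y)
          ≤ lmax ^ L.length * (θ + lmax * dA y) :=
        mul_le_mul_of_nonneg_left h2 (pow_nonneg hl0 _)
      simp only [List.foldl_cons, List.length_cons, geom_sum_succ', pow_succ]
      nlinarith [h1, h3]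
  -- every point of A is close to the attractor
  have hdir2 : ∀ x ∈ A, dA x ≤ θ * (1 - lmax)⁻¹ := by
    intro x hx
    obtain ⟨L, hLne, hfix⟩ := hrec x hx
    have hk : L.length ≠ 0 := fun h => hLne (List.length_eq_zero_iff.mp h)
    have h1 := horbit L x
    rw [hfix] at h1
    have hS : ∑ j ∈ Finset.range L.length, lmax ^ j
        = (1 - lmax ^ L.length) * (1 - lmax)⁻¹ := by
      rw [geom_sum_eq (by linarith : lmax ≠ 1)]
      rw [div_eq_mul_inv]
      rw [show (lmax ^ L.length - 1) = -(1 - lmax ^ L.length) by ring,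
          show (lmax - 1) = -(1 - lmax) by ring]
      rw [inv_neg]
      ring
    rw [hS] at h1
    have hpk1 : lmax ^ L.length < 1 := pow_lt_one₀ hl0 hl1 hk
    have hiq : 0 < (1 - lmax)⁻¹ := inv_pos.mpr hq0
    have h2 : dA x * (1 - lmax ^ L.length)
        ≤ θ * (1 - lmax)⁻¹ * (1 - lmax ^ L.length) := by nlinarith [h1]
    exact le_of_mul_le_mul_right (by linarith [h2]) (by linarith : 0 < 1 - lmax ^ L.length)
  -- direction 1 preliminaries
  obtain ⟨x0, hx0⟩ := hAne
  obtain ⟨R, hR⟩ := isBounded_iff_forall_norm_le.mp hAinf_cpt.isBounded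
  set C : ℝ := ∑ j : Fin n, nrm (fun k => if j = k then 1 else 0) with hCdef
  have hC0 : 0 ≤ C := Finset.sum_nonneg fun j _ => hnn _
  obtain ⟨a0, ha0⟩ := hAinf_ne
  have hR0 : 0 ≤ R := le_trans (norm_nonneg a0) (hR a0 ha0)
  set M : ℝ := C * (R + ‖x0‖) + 1 with hMdef
  have hM0 : 0 < M := by
    have : 0 ≤ C * (R + ‖x0‖) := mul_nonneg hC0 (by positivity)
    linarith
  have hMb : ∀ b ∈ Ainf, nrm (b - x0) ≤ M := by
    intro b hb
    calc nrm (b - x0) ≤ C * ‖b - x0‖ := nrm_le_C_mul' hnrm_eq hnrm_smul hnrm_add _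
      _ ≤ C * (R + ‖x0‖) := by
          apply mul_le_mul_of_nonneg_left _ hC0
          have := norm_sub_le b x0
          linarith [hR b hb]
      _ ≤ M := by linarith
  have hdecomp : ∀ k : ℕ, ∀ a ∈ Ainf, ∃ L : List (Fin N), L.length = k ∧
      ∃ b ∈ Ainf, L.foldr (fun i y => w i y) b = a := by
    intro k
    induction k with
    | zero => intro a ha; exact ⟨[], rfl, a, ha, rfl⟩
    | succ k ih =>
      intro a ha
      have hmem : a ∈ ⋃ i, w i '' Ainf := hAinf_inv ▸ ha
      obtain ⟨i, a', ha', hwa⟩ := by simpa [mem_iUnion] using hmem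
      obtain ⟨L, hL, b, hb, hfold⟩ := ih a' ha'
      exact ⟨i :: L, by simp [hL], b, hb, by simp [List.foldr_cons, hfold, hwa]⟩
  have hmemA : ∀ L : List (Fin N),
      L.foldr (fun i z => roundMap n δ (w i) z) x0 ∈ A := by
    intro L
    induction L with
    | nil => exact hx0
    | cons i L ih => exact hAw i _ ih
  have herrL : ∀ L : List (Fin N), ∀ b : Fin n → ℝ,
      nrm (L.foldr (fun i z => w i z) b
            - L.foldr (fun i z => roundMap n δ (w i) z) x0)
      ≤ lmax ^ L.length * nrm (b - x0)
        + θ * ∑ j ∈ Finset.range L.length, lmax ^ j := by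
    intro L b
    induction L with
    | nil => simp
    | cons i L ih =>
      set u := L.foldr (fun i z => w i z) b with hu
      set v := L.foldr (fun i z => roundMap n δ (w i) z) x0 with hv
      have h1 : nrm (w i u - roundMap n δ (w i) v)
          ≤ nrm (w i u - w i v) + nrm (w i v - roundPt n δ (w i v)) := htri _ _ _
      have h2 := hcon' i u v
      have h3 := herr (w i v)
      have h4 : lmax * nrm (u - v)
          ≤ lmax * (lmax ^ L.length * nrm (b - x0)
              + θ * ∑ j ∈ Finset.range L.length, lmax ^ j) :=
        mul_le_mul_of_nonneg_left ih hl0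
      simp only [List.foldr_cons, List.length_cons, geom_sum_succ, pow_succ]
      nlinarith [h1, h2, h3, h4]
  intro ε hε
  constructor
  · -- every attractor point is close to A
    intro a ha
    obtain ⟨k, hk⟩ := exists_pow_lt_of_lt_one (div_pos hε hM0) hl1
    obtain ⟨L, hLlen, b, hb, hfold⟩ := hdecomp k a ha
    refine ⟨L.foldr (fun i z => roundMap n δ (w i) z) x0, hmemA L, ?_⟩
    have h1 := herrL L b
    rw [hfold, hLlen] at h1
    have h2 : lmax ^ k * nrm (b - x0) ≤ lmax ^ k * M :=
      mul_le_mul_of_nonneg_left (hMb b hb) (pow_nonneg hl0 _)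
    have h3 : lmax ^ k * M < ε := by
      have := mul_lt_mul_of_pos_right hk hM0
      rwa [div_mul_cancel₀ _ hM0.ne'] at this
    have hS : ∑ j ∈ Finset.range k, lmax ^ j ≤ (1 - lmax)⁻¹ := by
      rw [geom_sum_eq (by linarith : lmax ≠ 1)]
      rw [div_eq_mul_inv,
          show (lmax ^ k - 1) = -(1 - lmax ^ k) by ring,
          show (lmax - 1) = -(1 - lmax) by ring, inv_neg]
      have hpk0 : 0 ≤ lmax ^ k := pow_nonneg hl0 k
      have : (1 - lmax ^ k) * (1 - lmax)⁻¹ ≤ 1 * (1 - lmax)⁻¹ :=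
        mul_le_mul_of_nonneg_right (by linarith) (le_of_lt (inv_pos.mpr hq0))
      nlinarith [this]
    have hSθ : θ * (∑ j ∈ Finset.range k, lmax ^ j) ≤ θ * (1 - lmax)⁻¹ :=
      mul_le_mul_of_nonneg_left hS hθ0
    linarith [h1, h2, h3, hSθ]
  · -- every point of A is close to the attractor
    intro x hx
    obtain ⟨a, ha, hax⟩ := hdA_ex x ε hε
    exact ⟨a, ha, lt_of_lt_of_le hax (by linarith [hdir2 x hx])⟩
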